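/- Let ζ : 𝒬₀ → ℝ, let f ∈ F_ζ, let S = supp(f) and x = π(f). Then the tangent cone of the polyhedron π(F_ζ) at x equals π(F₀(S̄)): ℝ₊(π(F_ζ) − x) = π(F₀(S̄)). In particular the tangent cone of π(F_ζ) at the minimal face containing x is independent of ζ, depending only on the closure of S. -/

import Mathlib

/-!
Common framework: finite quivers, flows, boundaries, cycles, closures, the projection π,
and the solution polyhedra of the (generalised) transportation problem, following
Sardo Infirri, "Orbifold Singularities and McKay Flows".
-/

open Finset

/-- A (finite) quiver given by tail and head maps on a type of arrows. -/
structure FQuiver (V A : Type) where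
  t : A → V
  h : A → V

namespace FQuiver

variable {V A : Type}

/-- The boundary (net contribution) of a flow `f : A → R` at each vertex. -/
def boundary [Fintype A] [DecidableEq V] (Q : FQuiver V A) {R : Type} [AddCommGroup R]
    (f : A → R) : V → R := fun v =>
  (∑ a ∈ univ.filter (fun a => Q.h a = v), f a) -
  (∑ a ∈ univ.filter (fun a => Q.t a = v), f a)

/-- Source of a step (an arrow together with a direction of traversal). -/
def stepSrc (Q : FQuiver V A) (s : A × Bool) : V := if s.2 then Q.t s.1 else Q.h s.1

/-- Destination of a step. -/
def stepDst (Q : FQuiver V A) (s : A × Bool) : V := if s.2 then Q.h s.1 else Q.t s.1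

/-- A walk (path) from `v` to `v'` in the underlying undirected graph of the quiver:
a nonempty list of steps which compose, with consecutive arrows distinct. -/
def IsWalk (Q : FQuiver V A) (p : List (A × Bool)) (v v' : V) : Prop :=
  p ≠ [] ∧
  p.head?.map Q.stepSrc = some v ∧
  p.getLast?.map Q.stepDst = some v' ∧
  List.Chain' (fun s s' => Q.stepDst s = Q.stepSrc s') p ∧
  List.Chain' (fun s s' : A × Bool => s.1 ≠ s'.1) p

/-- A cycle: a closed walk. -/
def IsCycle (Q : FQuiver V A) (p : List (A × Bool)) : Prop := ∃ v, Q.IsWalk p v v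

end FQuiver

variable {V A : Type}

/-- The positive part of a walk/cycle: the arrows traversed in agreement with it. -/
def posArrows (p : List (A × Bool)) : Set A := {a | (a, true) ∈ p}

/-- The negative part of a walk/cycle: the arrows traversed against it. -/
def negArrows (p : List (A × Bool)) : Set A := {a | (a, false) ∈ p}

/-- The (integral) basic flow associated to a walk/cycle. -/
def basicFlowZ [DecidableEq A] (p : List (A × Bool)) : A → ℤ := fun a =>
  (p.count (a, true) : ℤ) - (p.count (a, false) : ℤ)

/-- The basic flow associated to a walk/cycle, as a real flow. -/
def basicFlow [DecidableEq A] (p : List (A × Bool)) : A → ℝ := fun a =>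
  (basicFlowZ p a : ℝ)

/-- The linear map induced by a typing map `π : A → Fin n` on flows. -/
def piMap [Fintype A] {n : ℕ} (π : A → Fin n) {R : Type} [AddCommMonoid R] (f : A → R) :
    Fin n → R := fun i => ∑ a ∈ univ.filter (fun a => π a = i), f a

/-- The support of a flow. -/
def fsupport (f : A → ℝ) : Set A := {a | f a ≠ 0}

/-- The polyhedron `F_ζ` of admissible (nonnegative) `ζ`-flows. -/
def Fpoly [Fintype A] [DecidableEq V] (Q : FQuiver V A) (ζ : V → ℝ) : Set (A → ℝ) :=
  {f | (∀ a, 0 ≤ f a) ∧ Q.boundary f = ζ}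

/-- A set of arrows contains a cycle. -/
def ContainsCycle (Q : FQuiver V A) (S : Set A) : Prop :=
  ∃ p : List (A × Bool), Q.IsCycle p ∧ ∀ s ∈ p, s.1 ∈ S

/-- A set of arrows is closed if, for every cycle of type zero, it contains the positive
part iff it contains the negative part. -/
def IsClosedConfig [Fintype A] [DecidableEq A] {n : ℕ} (Q : FQuiver V A) (π : A → Fin n)
    (T : Set A) : Prop :=
  ∀ p : List (A × Bool), Q.IsCycle p → piMap π (basicFlowZ p) = 0 →
    (posArrows p ⊆ T ↔ negArrows p ⊆ T)

/-- The closure `S̄` of a configuration: the smallest closed over-set. -/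
def confClosure [Fintype A] [DecidableEq A] {n : ℕ} (Q : FQuiver V A) (π : A → Fin n)
    (S : Set A) : Set A :=
  ⋂₀ {T | S ⊆ T ∧ IsClosedConfig Q π T}

/-- `Z₀(S)`: the space of flows with zero boundary vanishing outside `S`. -/
def Z0 [Fintype A] [DecidableEq V] (Q : FQuiver V A) (S : Set A) : Set (A → ℝ) :=
  {g | Q.boundary g = 0 ∧ ∀ a ∉ S, g a = 0}

/-- `F₀(S)`: the cone of flows with zero boundary which are nonnegative outside `S`. -/
def F0cone [Fintype A] [DecidableEq V] (Q : FQuiver V A) (S : Set A) : Set (A → ℝ) :=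
  {g | Q.boundary g = 0 ∧ ∀ a ∉ S, 0 ≤ g a}

/-- The rank of a configuration: the dimension of `span(π(Z₀(S̄)))`. -/
noncomputable def confRank [Fintype A] [DecidableEq A] [DecidableEq V] {n : ℕ} (Q : FQuiver V A)
    (π : A → Fin n) (S : Set A) : ℕ :=
  Module.finrank ℝ
    (Submodule.span ℝ ((fun g : A → ℝ => piMap π g) '' Z0 Q (confClosure Q π S)))

/-- The projected polyhedron `π(F_ζ) ⊆ ℝⁿ`. -/
def piImg [Fintype A] [DecidableEq V] {n : ℕ} (Q : FQuiver V A) (π : A → Fin n) (ζ : V → ℝ) :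
    Set (Fin n → ℝ) := (fun g : A → ℝ => piMap π g) '' Fpoly Q ζ

/-- The tangent cone `ℝ₊(P − x)` of a convex set at a point. -/
def polyTangentCone {E : Type} [AddCommGroup E] [Module ℝ E] (P : Set E) (x : E) : Set E :=
  {y | ∃ t : ℝ, 0 ≤ t ∧ ∃ p ∈ P, y = t • (p - x)}

/-- A face of a convex set: a convex extreme subset. -/
def IsFace {E : Type} [AddCommGroup E] [Module ℝ E] (P F : Set E) : Prop :=
  Convex ℝ F ∧ IsExtreme ℝ P F

/-- `Face_ζ(S)` computed from a flow `f`: `π(F_ζ) ∩ (π(f) + span(π(Z₀(S̄))))`. -/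
def faceOf [Fintype A] [DecidableEq A] [DecidableEq V] {n : ℕ} (Q : FQuiver V A)
    (π : A → Fin n) (ζ : V → ℝ) (S : Set A) (f : A → ℝ) : Set (Fin n → ℝ) :=
  piImg Q π ζ ∩
    {y | y - piMap π f ∈
      Submodule.span ℝ ((fun g : A → ℝ => piMap π g) '' Z0 Q (confClosure Q π S))}

/-- The McKay quiver of the cyclic action `1/r (w₁, …, w_n)`: vertices `ℤ/rℤ` and one
arrow `a_v^i : v → v − w_i` for each vertex `v` and each `i`. -/
def mckayQuiver (r n : ℕ) (w : Fin n → ZMod r) : FQuiver (ZMod r) (ZMod r × Fin n) where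
  t := fun a => a.1
  h := fun a => a.1 - w a.2

/-- The commutation flow `χ_v^i + χ_{v−w_i}^j − χ_v^j − χ_{v−w_j}^i`. -/
def commFlow (r n : ℕ) (w : Fin n → ZMod r) (v : ZMod r) (i j : Fin n) :
    ZMod r × Fin n → ℤ := fun a =>
  (if a = (v, i) then 1 else 0) + (if a = (v - w i, j) then 1 else 0)
    - (if a = (v, j) then 1 else 0) - (if a = (v - w j, i) then 1 else 0)

/-- `Λ²`: the subgroup of integral flows generated by the commutation flows. -/
def mckayLambda2 (r n : ℕ) (w : Fin n → ZMod r) : AddSubgroup (ZMod r × Fin n → ℤ) :=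
  AddSubgroup.closure {g | ∃ v i j, g = commFlow r n w v i j}

section AuxStmt4

open Finset

variable {V A : Type} [Fintype A] [DecidableEq V] [DecidableEq A]

namespace Stmt4

lemma boundary_add (Q : FQuiver V A) (f g : A → ℝ) :
    Q.boundary (f + g) = Q.boundary f + Q.boundary g := by
  funext v
  simp only [FQuiver.boundary, Pi.add_apply, Finset.sum_add_distrib]
  ring

lemma boundary_smul (Q : FQuiver V A) (c : ℝ) (f : A → ℝ) :
    Q.boundary (c • f) = c • Q.boundary f := by
  funext v
  simp only [FQuiver.boundary, Pi.smul_apply, smul_eq_mul, ← Finset.mul_sum, mul_sub]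

lemma boundary_zero (Q : FQuiver V A) : Q.boundary (0 : A → ℝ) = 0 := by
  funext v; simp [FQuiver.boundary]

lemma piMap_add {n : ℕ} (π : A → Fin n) (f g : A → ℝ) :
    piMap π (f + g) = piMap π f + piMap π g := by
  funext i
  simp only [piMap, Pi.add_apply, Finset.sum_add_distrib]

lemma piMap_smul {n : ℕ} (π : A → Fin n) (c : ℝ) (f : A → ℝ) :
    piMap π (c • f) = c • piMap π f := by
  funext i
  simp only [piMap, Pi.smul_apply, smul_eq_mul, ← Finset.mul_sum]

lemma piMap_zero {n : ℕ} (π : A → Fin n) : piMap π (0 : A → ℝ) = 0 := by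
  funext i; simp [piMap]

/-- Signed indicator flow of a step. -/
def stepFlow (s : A × Bool) : A → ℝ := fun a =>
  if a = s.1 then (if s.2 then 1 else -1) else 0

lemma basicFlow_nil : basicFlow ([] : List (A × Bool)) = 0 := by
  funext a; simp [basicFlow, basicFlowZ]

lemma basicFlow_cons (s : A × Bool) (p : List (A × Bool)) :
    basicFlow (s :: p) = stepFlow s + basicFlow p := by
  funext a
  rcases s with ⟨a1, b⟩
  cases b <;> by_cases h : a = a1 <;>
    simp [basicFlow, basicFlowZ, stepFlow, List.count_cons, h, Prod.ext_iff, @eq_comm _ a1] <;> push_cast <;> ring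

lemma basicFlow_eq_sum (p : List (A × Bool)) :
    basicFlow p = (p.map stepFlow).sum := by
  induction p with
  | nil => simpa using basicFlow_nil
  | cons s p ih => simp [basicFlow_cons, ih]

lemma boundary_listSum (Q : FQuiver V A) (L : List (A → ℝ)) :
    Q.boundary L.sum = (L.map Q.boundary).sum := by
  induction L with
  | nil => simpa using boundary_zero Q
  | cons f L ih => simp [boundary_add, ih]

lemma boundary_stepFlow (Q : FQuiver V A) (s : A × Bool) :
    Q.boundary (stepFlow s) = fun v =>
      (if Q.stepDst s = v then (1 : ℝ) else 0) - (if Q.stepSrc s = v then 1 else 0) := by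
  funext v
  rcases s with ⟨a, b⟩
  cases b <;>
    simp [FQuiver.boundary, stepFlow, FQuiver.stepDst, FQuiver.stepSrc,
      Finset.sum_ite_eq' , Finset.mem_filter] <;> split_ifs <;> ring

/-- Telescoping sum along a chain of composable steps. -/
lemma telescope (Q : FQuiver V A) :
    ∀ (p : List (A × Bool)) (v v' : V), p ≠ [] →
      p.head?.map Q.stepSrc = some v →
      p.getLast?.map Q.stepDst = some v' →
      List.Chain' (fun s s' => Q.stepDst s = Q.stepSrc s') p →
      ((p.map (fun s => fun u =>
          (if Q.stepDst s = u then (1 : ℝ) else 0) - (if Q.stepSrc s = u then 1 else 0))).sum)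
        = fun u => (if v' = u then (1 : ℝ) else 0) - (if v = u then 1 else 0) := by
  intro p
  induction p with
  | nil => intro v v' h; exact absurd rfl h
  | cons s p ih =>
    intro v v' _ hhead hlast hchain
    simp only [List.head?_cons, Option.map_some, Option.some.injEq] at hhead
    cases p with
    | nil =>
      simp only [List.getLast?_singleton, Option.map_some, Option.some.injEq] at hlast
      funext u
      simp [hhead, hlast]
    | cons s' rest =>
      have hlast' : (s' :: rest).getLast?.map Q.stepDst = some v' := by
        rwa [List.getLast?_cons_cons] at hlast
      have hchain' : List.Chain' (fun a b => Q.stepDst a = Q.stepSrc b) (s' :: rest) :=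
        hchain.tail
      have hds : Q.stepDst s = Q.stepSrc s' := by
        exact (List.isChain_cons_cons.mp hchain).1
      have := ih (Q.stepSrc s') v' (by simp) (by simp) hlast' hchain'
      funext u
      have h2 := congrFun this u
      simp only [List.map_cons, List.sum_cons, Pi.add_apply] at h2 ⊢
      rw [h2, hds, hhead]
      ring

lemma boundary_basicFlow_cycle (Q : FQuiver V A) (p : List (A × Bool))
    (hp : Q.IsCycle p) : Q.boundary (basicFlow p) = 0 := by
  obtain ⟨v, hne, hhead, hlast, hchain, -⟩ := hp
  rw [basicFlow_eq_sum, boundary_listSum, List.map_map]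
  have : (Q.boundary ∘ stepFlow : A × Bool → V → ℝ) = fun s => fun u =>
      (if Q.stepDst s = u then (1 : ℝ) else 0) - (if Q.stepSrc s = u then 1 else 0) := by
    funext s; exact boundary_stepFlow Q s
  rw [this, telescope Q p v v hne hhead hlast hchain]
  funext u; simp

lemma piMap_basicFlow_zero {n : ℕ} (π : A → Fin n) (p : List (A × Bool))
    (h : piMap π (basicFlowZ p) = 0) : piMap π (basicFlow p) = 0 := by
  funext i
  have h2 := congrFun h i
  simp only [piMap, Pi.zero_apply] at h2 ⊢
  calc ∑ a ∈ univ.filter (fun a => π a = i), basicFlow p a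
      = ((∑ a ∈ univ.filter (fun a => π a = i), basicFlowZ p a : ℤ) : ℝ) := by
        rw [Int.cast_sum]; rfl
    _ = 0 := by rw [h2]; simp

lemma boundary_sub (Q : FQuiver V A) (f g : A → ℝ) :
    Q.boundary (f - g) = Q.boundary f - Q.boundary g := by
  funext v
  simp only [FQuiver.boundary, Pi.sub_apply, Finset.sum_sub_distrib]
  ring

lemma boundary_neg (Q : FQuiver V A) (f : A → ℝ) :
    Q.boundary (-f) = -Q.boundary f := by
  have : -f = (0 : A → ℝ) - f := by funext a; simp
  rw [this, boundary_sub, boundary_zero]; simp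

lemma piMap_sub {n : ℕ} (π : A → Fin n) (f g : A → ℝ) :
    piMap π (f - g) = piMap π f - piMap π g := by
  funext i
  simp only [piMap, Pi.sub_apply, Finset.sum_sub_distrib]

lemma piMap_neg {n : ℕ} (π : A → Fin n) (f : A → ℝ) :
    piMap π (-f) = -piMap π f := by
  have : -f = (0 : A → ℝ) - f := by funext a; simp
  rw [this, piMap_sub, piMap_zero]; simp

/-- A "good" correction flow: zero boundary, zero type, nonnegative off `S`. -/
def GoodFlow (Q : FQuiver V A) {n : ℕ} (π : A → Fin n) (S : Set A) (h : A → ℝ) : Prop :=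
  Q.boundary h = 0 ∧ piMap π h = 0 ∧ ∀ b ∉ S, 0 ≤ h b

lemma good_zero (Q : FQuiver V A) {n : ℕ} (π : A → Fin n) (S : Set A) :
    GoodFlow Q π S 0 :=
  ⟨boundary_zero Q, piMap_zero π, fun _ _ => le_refl 0⟩

lemma good_add (Q : FQuiver V A) {n : ℕ} (π : A → Fin n) (S : Set A) (h1 h2 : A → ℝ)
    (g1 : GoodFlow Q π S h1) (g2 : GoodFlow Q π S h2) : GoodFlow Q π S (h1 + h2) := by
  obtain ⟨b1, p1, n1⟩ := g1
  obtain ⟨b2, p2, n2⟩ := g2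
  exact ⟨by rw [boundary_add, b1, b2]; simp, by rw [piMap_add, p1, p2]; simp,
    fun b hb => add_nonneg (n1 b hb) (n2 b hb)⟩

lemma good_smul (Q : FQuiver V A) {n : ℕ} (π : A → Fin n) (S : Set A) (c : ℝ) (hc : 0 ≤ c)
    (h : A → ℝ) (g : GoodFlow Q π S h) : GoodFlow Q π S (c • h) := by
  obtain ⟨b1, p1, n1⟩ := g
  refine ⟨by rw [boundary_smul, b1]; simp, by rw [piMap_smul, p1]; simp, fun b hb => ?_⟩
  exact mul_nonneg hc (n1 b hb)

lemma good_sum (Q : FQuiver V A) {n : ℕ} (π : A → Fin n) (S : Set A) {ι : Type}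
    (s : Finset ι) (h : ι → A → ℝ) (hg : ∀ i ∈ s, GoodFlow Q π S (h i)) :
    GoodFlow Q π S (∑ i ∈ s, h i) :=
  Finset.sum_induction h (GoodFlow Q π S) (good_add Q π S) (good_zero Q π S) hg

/-- Absorption: if every arrow off `S` where `u` is negative admits a good witness,
then some good flow dominates `-u` off `S`. -/
lemma absorb (Q : FQuiver V A) {n : ℕ} (π : A → Fin n) (S : Set A) (u : A → ℝ)
    (hw : ∀ a ∉ S, u a < 0 → ∃ h, GoodFlow Q π S h ∧ 0 < h a) :
    ∃ h, GoodFlow Q π S h ∧ ∀ a ∉ S, 0 ≤ u a + h a := by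
  classical
  set N : Finset A := univ.filter (fun a => a ∉ S ∧ u a < 0) with hN
  have key : ∀ a : A, ∃ h, GoodFlow Q π S h ∧ (a ∈ N → 0 < h a) := by
    intro a
    by_cases ha : a ∈ N
    · obtain ⟨hS, hu⟩ := (Finset.mem_filter.mp ha).2
      obtain ⟨h, hg, hp⟩ := hw a hS hu
      exact ⟨h, hg, fun _ => hp⟩
    · exact ⟨0, good_zero Q π S, fun h => absurd h ha⟩
  choose h hg hp using key
  have hH : GoodFlow Q π S (∑ a ∈ N, h a) := good_sum Q π S N h (fun i _ => hg i)
  set H : A → ℝ := ∑ a ∈ N, h a with hHdef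
  have Happ : ∀ a, H a = ∑ b ∈ N, h b a := by
    intro a; rw [hHdef]; exact Finset.sum_apply a N h
  have Hpos : ∀ a ∈ N, 0 < H a := by
    intro a ha
    have haS : a ∉ S := (Finset.mem_filter.mp ha).2.1
    rw [Happ]
    have h1 : ∀ b ∈ N, 0 ≤ h b a := fun b _ => (hg b).2.2 a haS
    calc (0:ℝ) < h a a := hp a ha
      _ ≤ ∑ b ∈ N, h b a := Finset.single_le_sum h1 ha
  have Hnonneg : ∀ a ∉ S, 0 ≤ H a := hH.2.2
  set M : ℝ := ∑ a ∈ N, (-u a) / H a with hM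
  have termpos : ∀ a ∈ N, 0 ≤ (-u a) / H a := by
    intro a ha
    have hu : u a < 0 := (Finset.mem_filter.mp ha).2.2
    exact le_of_lt (div_pos (by linarith) (Hpos a ha))
  have hM0 : 0 ≤ M := Finset.sum_nonneg termpos
  refine ⟨M • H, good_smul Q π S M hM0 H hH, ?_⟩
  intro a haS
  have happ : (M • H) a = M * H a := rfl
  by_cases hu : u a < 0
  · have haN : a ∈ N := by simp [hN, haS, hu]
    have h1 : (-u a) / H a ≤ M := Finset.single_le_sum termpos haN
    rw [div_le_iff₀ (Hpos a haN)] at h1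
    rw [happ]; nlinarith
  · push_neg at hu
    rw [happ]
    have := mul_nonneg hM0 (Hnonneg a haS)
    linarith

/-- The auxiliary closed configuration. -/
def Tset (Q : FQuiver V A) {n : ℕ} (π : A → Fin n) (S : Set A) : Set A :=
  S ∪ {a | ∃ h, GoodFlow Q π S h ∧ 0 < h a}

lemma witness_of_mem_T {Q : FQuiver V A} {n : ℕ} {π : A → Fin n} {S : Set A} {a : A}
    (ha : a ∈ Tset Q π S) (haS : a ∉ S) : ∃ h, GoodFlow Q π S h ∧ 0 < h a := by
  rcases ha with h | h
  · exact absurd h haS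
  · exact h

lemma mem_T_of_good (Q : FQuiver V A) {n : ℕ} (π : A → Fin n) (S : Set A) (u : A → ℝ)
    (hb0 : Q.boundary u = 0) (hp0 : piMap π u = 0)
    (hwit : ∀ a ∉ S, u a < 0 → ∃ h, GoodFlow Q π S h ∧ 0 < h a)
    {b : A} (hub : 0 < u b) : b ∈ Tset Q π S := by
  by_cases hbS : b ∈ S
  · exact Or.inl hbS
  obtain ⟨h, hgood, hge⟩ := absorb Q π S u hwit
  refine Or.inr ⟨u + h, ⟨by rw [boundary_add, hb0, hgood.1]; simp,
    by rw [piMap_add, hp0, hgood.2.1]; simp, fun c hc => hge c hc⟩, ?_⟩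
  have := hgood.2.2 b hbS
  simp only [Pi.add_apply]
  linarith

lemma mem_pos_of_flow_pos {p : List (A × Bool)} {a : A} (h : 0 < basicFlowZ p a) :
    a ∈ posArrows p := by
  by_contra hc
  have h0 : p.count (a, true) = 0 := List.count_eq_zero.mpr hc
  simp only [basicFlowZ, h0] at h
  omega

lemma mem_neg_of_flow_neg {p : List (A × Bool)} {a : A} (h : basicFlowZ p a < 0) :
    a ∈ negArrows p := by
  by_contra hc
  have h0 : p.count (a, false) = 0 := List.count_eq_zero.mpr hc
  simp only [basicFlowZ, h0] at h
  omega

lemma basicFlow_cast (p : List (A × Bool)) (a : A) :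
    basicFlow p a = ((basicFlowZ p a : ℤ) : ℝ) := rfl

lemma T_closed (Q : FQuiver V A) {n : ℕ} (π : A → Fin n) (S : Set A) :
    IsClosedConfig Q π (Tset Q π S) := by
  intro p hcyc htype
  have hb0 : Q.boundary (basicFlow p) = 0 := boundary_basicFlow_cycle Q p hcyc
  have hp0 : piMap π (basicFlow p) = 0 := piMap_basicFlow_zero π p htype
  constructor
  · intro hpos b hb
    by_cases hbS : b ∈ S
    · exact Or.inl hbS
    rcases lt_or_ge (basicFlowZ p b) 0 with hlt | hge
    · refine mem_T_of_good Q π S (-basicFlow p)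
        (by rw [boundary_neg, hb0]; simp) (by rw [piMap_neg, hp0]; simp) ?_ ?_
      · intro a haS hua
        have h1 : 0 < basicFlowZ p a := by
          have : 0 < basicFlow p a := by simpa using hua
          rw [basicFlow_cast] at this; exact_mod_cast this
        exact witness_of_mem_T (hpos (mem_pos_of_flow_pos h1)) haS
      · have : basicFlow p b < 0 := by rw [basicFlow_cast]; exact_mod_cast hlt
        simpa using this
    · have h1 : 0 < p.count (b, false) := List.count_pos_iff.mpr hb
      have h2 : 0 < p.count (b, true) := by
        simp only [basicFlowZ] at hge; omega
      exact hpos (List.count_pos_iff.mp h2)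
  · intro hneg b hb
    by_cases hbS : b ∈ S
    · exact Or.inl hbS
    rcases lt_or_ge 0 (basicFlowZ p b) with hlt | hge
    · refine mem_T_of_good Q π S (basicFlow p) hb0 hp0 ?_ ?_
      · intro a haS hua
        have h1 : basicFlowZ p a < 0 := by
          rw [basicFlow_cast] at hua; exact_mod_cast hua
        exact witness_of_mem_T (hneg (mem_neg_of_flow_neg h1)) haS
      · rw [basicFlow_cast]; exact_mod_cast hlt
    · have h1 : 0 < p.count (b, true) := List.count_pos_iff.mpr hb
      have h2 : 0 < p.count (b, false) := by
        simp only [basicFlowZ] at hge; omega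
      exact hneg (List.count_pos_iff.mp h2)

lemma closure_subset_T (Q : FQuiver V A) {n : ℕ} (π : A → Fin n) (S : Set A) :
    confClosure Q π S ⊆ Tset Q π S :=
  Set.sInter_subset_of_mem ⟨Set.subset_union_left, T_closed Q π S⟩

lemma subset_closure (Q : FQuiver V A) {n : ℕ} (π : A → Fin n) (S : Set A) :
    S ⊆ confClosure Q π S :=
  Set.subset_sInter (fun _ hT => hT.1)

lemma exists_eps (f h : A → ℝ) (hf : ∀ a, 0 ≤ f a) (hh : ∀ a, f a = 0 → 0 ≤ h a) :
    ∃ ε : ℝ, 0 < ε ∧ ∀ a, 0 ≤ f a + ε * h a := by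
  classical
  set D : Finset A := univ.filter (fun a => h a < 0) with hD
  have hfD : ∀ a ∈ D, 0 < f a := by
    intro a ha
    have hha : h a < 0 := (Finset.mem_filter.mp ha).2
    rcases lt_or_eq_of_le (hf a) with h1 | h1
    · exact h1
    · exact absurd (hh a h1.symm) (not_le.mpr hha)
  set B : ℝ := ∑ a ∈ D, (-h a) / f a with hB
  have termpos : ∀ a ∈ D, 0 ≤ (-h a) / f a := by
    intro a ha
    have hha : h a < 0 := (Finset.mem_filter.mp ha).2
    exact le_of_lt (div_pos (by linarith) (hfD a ha))
  have hB0 : 0 ≤ B := Finset.sum_nonneg termpos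
  refine ⟨(1 + B)⁻¹, by positivity, ?_⟩
  intro a
  by_cases hha : h a < 0
  · have haD : a ∈ D := by simp [hD, hha]
    have h1 : (-h a) / f a ≤ B := Finset.single_le_sum termpos haD
    rw [div_le_iff₀ (hfD a haD)] at h1
    have h3 : -h a ≤ (1 + B) * f a := by nlinarith [hf a]
    have h4 : (1 + B)⁻¹ * (-h a) ≤ f a := by
      rw [inv_mul_le_iff₀ (by positivity : (0:ℝ) < 1 + B)]
      nlinarith [hf a]
    linarith
  · push_neg at hha
    have := mul_nonneg (le_of_lt (by positivity : (0:ℝ) < (1 + B)⁻¹)) hha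
    linarith [hf a]

end Stmt4

end AuxStmt4


/-- For `f ∈ F_ζ` with `S = supp(f)` and `x = π(f)`, the tangent cone
`ℝ₊(π(F_ζ) − x)` of the polyhedron `π(F_ζ)` at `x` equals `π(F₀(S̄))`. -/
theorem statement4 {V A : Type} [Fintype V] [Fintype A] [DecidableEq V] [DecidableEq A]
    (Q : FQuiver V A) {n : ℕ} (hn : 1 ≤ n) (π : A → Fin n) (ζ : V → ℝ)
    (f : A → ℝ) (hf : f ∈ Fpoly Q ζ) :
    polyTangentCone (piImg Q π ζ) (piMap π f) =
      (fun g : A → ℝ => piMap π g) '' F0cone Q (confClosure Q π (fsupport f)) := by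
  classical
  obtain ⟨hfnn, hfb⟩ := hf
  set S : Set A := fsupport f with hS
  apply Set.Subset.antisymm
  · rintro y ⟨t, ht, q, ⟨f', ⟨hf'nn, hf'b⟩, rfl⟩, rfl⟩
    refine ⟨t • (f' - f), ⟨?_, ?_⟩, ?_⟩
    · rw [Stmt4.boundary_smul, Stmt4.boundary_sub, hf'b, hfb]; simp
    · intro a ha
      have haS : a ∉ S := fun h => ha (Stmt4.subset_closure Q π S h)
      have hfa : f a = 0 := by
        by_contra hne
        exact haS hne
      have : (t • (f' - f)) a = t * (f' a - f a) := rfl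
      rw [this, hfa]
      have := hf'nn a
      nlinarith
    · show piMap π (t • (f' - f)) = t • (piMap π f' - piMap π f)
      rw [Stmt4.piMap_smul, Stmt4.piMap_sub]
  · rintro y ⟨g, ⟨hgb, hgnn⟩, rfl⟩
    have hwit : ∀ a ∉ S, g a < 0 → ∃ h, Stmt4.GoodFlow Q π S h ∧ 0 < h a := by
      intro a haS hga
      have haCl : a ∈ confClosure Q π S := by
        by_contra hc
        exact absurd (hgnn a hc) (not_le.mpr hga)
      exact Stmt4.witness_of_mem_T (Stmt4.closure_subset_T Q π S haCl) haS
    obtain ⟨h, hgood, hge⟩ := Stmt4.absorb Q π S g hwit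
    set g' : A → ℝ := g + h with hg'
    have hg'b : Q.boundary g' = 0 := by
      rw [hg', Stmt4.boundary_add, hgb, hgood.1]; simp
    have hg'pi : piMap π g' = piMap π g := by
      rw [hg', Stmt4.piMap_add, hgood.2.1]; simp
    have hg'nn : ∀ a, f a = 0 → 0 ≤ g' a := by
      intro a hfa
      have haS : a ∉ S := by
        rw [hS]
        simp [fsupport, hfa]
      exact hge a haS
    obtain ⟨ε, hε, hfε⟩ := Stmt4.exists_eps f g' hfnn hg'nn
    refine ⟨ε⁻¹, le_of_lt (by positivity), piMap π (f + ε • g'),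
      ⟨f + ε • g', ⟨?_, ?_⟩, rfl⟩, ?_⟩
    · intro a
      have := hfε a
      simpa using this
    · rw [Stmt4.boundary_add, Stmt4.boundary_smul, hfb, hg'b]; simp
    · rw [Stmt4.piMap_add, Stmt4.piMap_smul, hg'pi, add_sub_cancel_left, smul_smul,
        inv_mul_cancel₀ (ne_of_gt hε), one_smul]
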